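/- Let 1 ≤ p < 2 and n ≥ 1, and equip the Hamming cube H_n = {0,1}^n with the ℓ_p metric d_p(x,y) = (#{i : x_i ≠ y_i})^{1/p}. Then: (i) for every real Hilbert space H, every injective map f : H_n → H, and all constants A, B > 0 with A·d_p(x,y) ≤ ‖f(x) − f(y)‖_H ≤ B·d_p(x,y) for all x, y ∈ H_n, one has B/A ≥ n^{1/p − 1/2}; and (ii) there exists a map f : H_n → ℝ^n (with the Euclidean norm) and constants A, B > 0 with B/A = n^{1/p − 1/2} such that A·d_p(x,y) ≤ ‖f(x) − f(y)‖ ≤ B·d_p(x,y) for all x, y ∈ H_n. Hence the Euclidean distortion of (H_n, d_p) equals diam(H_n, d_p)^{1 − p/2} = n^{1/p − 1/2}. -/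

import Mathlib

open Finset

private def cns {n : ℕ} (b : Bool) (x : Fin n → Bool) : Fin (n+1) → Bool := Fin.cons b x

private lemma cns_upd0 {n : ℕ} (b : Bool) (x : Fin n → Bool) :
    Function.update (cns b x) 0 (! (cns b x) 0) = cns (!b) x := by
  unfold cns; rw [Fin.cons_zero, Fin.update_cons_zero]

private lemma cns_upds {n : ℕ} (b : Bool) (x : Fin n → Bool) (i : Fin n) :
    Function.update (cns b x) i.succ (! (cns b x) i.succ)
      = cns b (Function.update x i (! x i)) := by
  unfold cns; rw [Fin.cons_succ]; exact (Fin.cons_update (α := fun _ => Bool) b x i (! x i)).symm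

private lemma cns_neg {n : ℕ} (b : Bool) (x : Fin n → Bool) :
    (fun i => ! (cns b x) i) = cns (!b) (fun i => ! x i) := by
  unfold cns; funext i; cases i using Fin.cases <;> simp

section Enflo

variable {H : Type*} [NormedAddCommGroup H] [InnerProductSpace ℝ H]

local notation "⟪" x ", " y "⟫" => @inner ℝ _ _ x y

private lemma quad_ineq (a b c d : H) :
    ‖a - c‖ ^ 2 + ‖b - d‖ ^ 2 ≤ ‖a - b‖ ^ 2 + ‖b - c‖ ^ 2 + ‖c - d‖ ^ 2 + ‖d - a‖ ^ 2 := by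
  have h0 : (0:ℝ) ≤ ‖(a + c) - (b + d)‖ ^ 2 := sq_nonneg _
  have h1 := norm_sub_sq_real (a + c) (b + d)
  have h2 := norm_add_sq_real a c
  have h3 := norm_add_sq_real b d
  have h4 := norm_sub_sq_real a b
  have h5 := norm_sub_sq_real b c
  have h6 := norm_sub_sq_real c d
  have h7 := norm_sub_sq_real d a
  have h8 := norm_sub_sq_real a c
  have h9 := norm_sub_sq_real b d
  have i1 : ⟪a + c, b + d⟫ = ⟪a, b⟫ + ⟪a, d⟫ + ⟪c, b⟫ + ⟪c, d⟫ := by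
    rw [inner_add_left, inner_add_right, inner_add_right]; ring
  have c1 : ⟪d, a⟫ = ⟪a, d⟫ := real_inner_comm _ _
  have c2 : ⟪b, c⟫ = ⟪c, b⟫ := real_inner_comm _ _
  linarith

private lemma enflo : ∀ (n : ℕ) (f : (Fin n → Bool) → H),
    ∑ x : Fin n → Bool, ‖f x - f (fun i => ! x i)‖ ^ 2 ≤
      ∑ x : Fin n → Bool, ∑ i : Fin n, ‖f x - f (Function.update x i (! x i))‖ ^ 2 := by
  intro n
  induction n with
  | zero =>
      intro f
      have hx : ∀ x : Fin 0 → Bool, (fun i => ! x i) = x := fun x => funext fun i => i.elim0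
      simp [hx]
  | succ n ih =>
      intro f
      have key : ∀ F : (Fin (n+1) → Bool) → ℝ,
          ∑ y : Fin (n+1) → Bool, F y
            = ∑ b : Bool, ∑ x : Fin n → Bool, F (cns b x) := by
        intro F
        rw [← Equiv.sum_comp (Fin.consEquiv fun _ => Bool) F, Fintype.sum_prod_type]
        exact Finset.sum_congr rfl fun b _ => Finset.sum_congr rfl fun x _ => rfl
      have hinv : Function.Involutive (fun x : Fin n → Bool => fun i => ! x i) :=
        fun x => funext fun i => Bool.not_not _
      have hreindex : ∀ G : (Fin n → Bool) → ℝ,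
          ∑ x : Fin n → Bool, G (fun i => ! x i) = ∑ x : Fin n → Bool, G x :=
        fun G => Fintype.sum_equiv (Function.Involutive.toPerm _ hinv) _ _ (fun x => rfl)
      rw [key, key (fun y => ∑ i, ‖f y - f (Function.update y i (! y i))‖ ^ 2)]
      have hL : ∑ b : Bool, ∑ x : Fin n → Bool,
            ‖f (cns b x) - f (fun i => ! (cns b x) i)‖ ^ 2
          = ∑ x : Fin n → Bool,
              (‖f (cns true x) - f (cns false (fun i => ! x i))‖ ^ 2
               + ‖f (cns false x) - f (cns true (fun i => ! x i))‖ ^ 2) := by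
        simp only [cns_neg, Fintype.sum_bool, Bool.not_true, Bool.not_false,
          ← Finset.sum_add_distrib]
      have hR : ∑ b : Bool, ∑ x : Fin n → Bool,
            (∑ i : Fin (n+1), ‖f (cns b x)
              - f (Function.update (cns b x) i (! (cns b x) i))‖ ^ 2)
          = (∑ x : Fin n → Bool,
              (‖f (cns true x) - f (cns false x)‖ ^ 2
               + ‖f (cns false x) - f (cns true x)‖ ^ 2))
            + ((∑ x : Fin n → Bool, ∑ i : Fin n,
                ‖f (cns true x) - f (cns true (Function.update x i (! x i)))‖ ^ 2)
              + (∑ x : Fin n → Bool, ∑ i : Fin n,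
                ‖f (cns false x) - f (cns false (Function.update x i (! x i)))‖ ^ 2)) := by
        have hsplit : ∀ (b : Bool) (x : Fin n → Bool),
            (∑ i : Fin (n+1), ‖f (cns b x)
              - f (Function.update (cns b x) i (! (cns b x) i))‖ ^ 2)
            = ‖f (cns b x) - f (cns (!b) x)‖ ^ 2
              + ∑ i : Fin n, ‖f (cns b x)
                  - f (cns b (Function.update x i (! x i)))‖ ^ 2 := by
          intro b x
          rw [Fin.sum_univ_succ, cns_upd0]
          congr 1
          exact Finset.sum_congr rfl fun i _ => by rw [cns_upds]
        simp only [hsplit, Fintype.sum_bool, Bool.not_true, Bool.not_false,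
          Finset.sum_add_distrib]
      rw [hL, hR]
      have hquad : ∀ x : Fin n → Bool,
          ‖f (cns true x) - f (cns false (fun i => ! x i))‖ ^ 2
            + ‖f (cns false x) - f (cns true (fun i => ! x i))‖ ^ 2
          ≤ (‖f (cns false x) - f (cns false (fun i => ! x i))‖ ^ 2
              + ‖f (cns true x) - f (cns true (fun i => ! x i))‖ ^ 2)
            + (‖f (cns true x) - f (cns false x)‖ ^ 2
              + ‖f (cns true (fun i => ! x i)) - f (cns false (fun i => ! x i))‖ ^ 2) := by
        intro x
        have h := quad_ineq (f (cns false x)) (f (cns false (fun i => ! x i)))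
          (f (cns true (fun i => ! x i))) (f (cns true x))
        have sym : ∀ u v : H, ‖u - v‖ ^ 2 = ‖v - u‖ ^ 2 := fun u v => by rw [norm_sub_rev]
        linarith [h, sym (f (cns false (fun i => ! x i))) (f (cns true x)),
          sym (f (cns false (fun i => ! x i))) (f (cns true (fun i => ! x i))),
          sym (f (cns true (fun i => ! x i))) (f (cns true x)),
          sym (f (cns true x)) (f (cns false x))]
      calc
        ∑ x : Fin n → Bool,
            (‖f (cns true x) - f (cns false (fun i => ! x i))‖ ^ 2
             + ‖f (cns false x) - f (cns true (fun i => ! x i))‖ ^ 2)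
          ≤ ∑ x : Fin n → Bool,
              ((‖f (cns false x) - f (cns false (fun i => ! x i))‖ ^ 2
                + ‖f (cns true x) - f (cns true (fun i => ! x i))‖ ^ 2)
               + (‖f (cns true x) - f (cns false x)‖ ^ 2
                + ‖f (cns true (fun i => ! x i)) - f (cns false (fun i => ! x i))‖ ^ 2)) :=
            Finset.sum_le_sum fun x _ => hquad x
        _ = (∑ x : Fin n → Bool, ‖f (cns false x) - f (cns false (fun i => ! x i))‖ ^ 2)
            + (∑ x : Fin n → Bool, ‖f (cns true x) - f (cns true (fun i => ! x i))‖ ^ 2)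
            + ((∑ x : Fin n → Bool, ‖f (cns true x) - f (cns false x)‖ ^ 2)
              + (∑ x : Fin n → Bool,
                  ‖f (cns true (fun i => ! x i)) - f (cns false (fun i => ! x i))‖ ^ 2)) := by
            simp only [Finset.sum_add_distrib]
        _ = (∑ x : Fin n → Bool, ‖f (cns false x) - f (cns false (fun i => ! x i))‖ ^ 2)
            + (∑ x : Fin n → Bool, ‖f (cns true x) - f (cns true (fun i => ! x i))‖ ^ 2)
            + ((∑ x : Fin n → Bool, ‖f (cns true x) - f (cns false x)‖ ^ 2)
              + (∑ x : Fin n → Bool, ‖f (cns true x) - f (cns false x)‖ ^ 2)) := by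
            congr 1
            congr 1
            exact hreindex (fun z => ‖f (cns true z) - f (cns false z)‖ ^ 2)
        _ ≤ (∑ x : Fin n → Bool, ∑ i : Fin n,
              ‖f (cns false x) - f (cns false (Function.update x i (! x i)))‖ ^ 2)
            + (∑ x : Fin n → Bool, ∑ i : Fin n,
              ‖f (cns true x) - f (cns true (Function.update x i (! x i)))‖ ^ 2)
            + ((∑ x : Fin n → Bool, ‖f (cns true x) - f (cns false x)‖ ^ 2)
              + (∑ x : Fin n → Bool, ‖f (cns true x) - f (cns false x)‖ ^ 2)) := by
            have h1 := ih (fun x => f (cns false x))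
            have h2 := ih (fun x => f (cns true x))
            linarith
        _ = (∑ x : Fin n → Bool,
              (‖f (cns true x) - f (cns false x)‖ ^ 2
               + ‖f (cns false x) - f (cns true x)‖ ^ 2))
            + ((∑ x : Fin n → Bool, ∑ i : Fin n,
                ‖f (cns true x) - f (cns true (Function.update x i (! x i)))‖ ^ 2)
              + (∑ x : Fin n → Bool, ∑ i : Fin n,
                ‖f (cns false x) - f (cns false (Function.update x i (! x i)))‖ ^ 2)) := by
            simp only [Finset.sum_add_distrib]
            have hrev : ∀ x : Fin n → Bool, ‖f (cns false x) - f (cns true x)‖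
                = ‖f (cns true x) - f (cns false x)‖ := fun x => norm_sub_rev _ _
            simp only [hrev]
            ring

end Enflo

/-- For `1 ≤ p < 2` and `n ≥ 1`, the Hamming cube `H_n = {0,1}^n` with
the `ℓ_p` metric `d_p(x,y) = (#{i : x_i ≠ y_i})^(1/p)` has Euclidean distortion exactly
`n^(1/p - 1/2)`:
(i) every injective bi-Lipschitz map `f : H_n → H` into a real Hilbert space, with
constants `A, B > 0` satisfying `A·d_p(x,y) ≤ ‖f x - f y‖ ≤ B·d_p(x,y)`, has
`B/A ≥ n^(1/p - 1/2)`;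
(ii) there is a map `f : H_n → ℝⁿ` (Euclidean norm) and constants `A, B > 0` with
`B/A = n^(1/p - 1/2)` satisfying the same two-sided inequality.
The cube is modelled as `Fin n → Bool`. -/
theorem hamming_cube_lp_metric_distortion
    (p : ℝ) (hp1 : 1 ≤ p) (hp2 : p < 2) (n : ℕ) (hn : 1 ≤ n) :
    (∀ (H : Type) [NormedAddCommGroup H] [InnerProductSpace ℝ H] [CompleteSpace H],
      ∀ f : (Fin n → Bool) → H, Function.Injective f →
      ∀ A B : ℝ, 0 < A → 0 < B →
      (∀ x y : Fin n → Bool,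
        A * ((Finset.univ.filter fun i => x i ≠ y i).card : ℝ) ^ (1 / p) ≤ ‖f x - f y‖ ∧
        ‖f x - f y‖ ≤ B * ((Finset.univ.filter fun i => x i ≠ y i).card : ℝ) ^ (1 / p)) →
      (n : ℝ) ^ (1 / p - 1 / 2) ≤ B / A) ∧
    (∃ (f : (Fin n → Bool) → EuclideanSpace ℝ (Fin n)) (A B : ℝ),
      0 < A ∧ 0 < B ∧ B / A = (n : ℝ) ^ (1 / p - 1 / 2) ∧
      ∀ x y : Fin n → Bool,
        A * ((Finset.univ.filter fun i => x i ≠ y i).card : ℝ) ^ (1 / p) ≤ ‖f x - f y‖ ∧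
        ‖f x - f y‖ ≤ B * ((Finset.univ.filter fun i => x i ≠ y i).card : ℝ) ^ (1 / p)) := by
  have hp0 : (0:ℝ) < p := lt_of_lt_of_le one_pos hp1
  have hnR : (0:ℝ) < (n:ℝ) := by exact_mod_cast hn
  have h12 : (1:ℝ)/2 ≤ 1/p := by
    rw [div_le_div_iff₀ (by norm_num) hp0]; linarith
  have hpow : ∀ a : ℝ, ((n:ℝ) ^ a) ^ 2 = (n:ℝ) ^ (a * 2) := fun a => by
    rw [← Real.rpow_natCast ((n:ℝ) ^ a) 2, ← Real.rpow_mul hnR.le]; norm_num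
  constructor
  · -- part (i): lower bound on the distortion
    intro Hs _ _ _ f _ A B hA hB hAB
    have hE := enflo n f
    have hdiag : ∀ x : Fin n → Bool,
        (A * (n:ℝ) ^ (1/p)) ^ 2 ≤ ‖f x - f (fun i => ! x i)‖ ^ 2 := by
      intro x
      have h := (hAB x (fun i => ! x i)).1
      have hc : ((univ.filter fun i => x i ≠ (fun j => ! x j) i)).card = n := by simp
      rw [hc] at h
      exact pow_le_pow_left₀ (by positivity) h 2
    have hedge : ∀ (x : Fin n → Bool) (i : Fin n),
        ‖f x - f (Function.update x i (! x i))‖ ^ 2 ≤ B ^ 2 := by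
      intro x i
      have h := (hAB x (Function.update x i (! x i))).2
      have hc : ((univ.filter fun j => x j ≠ Function.update x i (! x i) j)).card = 1 := by
        have hone : (univ.filter fun j => x j ≠ Function.update x i (! x i) j) = {i} := by
          ext j
          by_cases hji : j = i <;> simp [Function.update_apply, hji]
        rw [hone, Finset.card_singleton]
      rw [hc, Nat.cast_one, Real.one_rpow, mul_one] at h
      exact pow_le_pow_left₀ (norm_nonneg _) h 2
    have hcard : (0:ℝ) < (Fintype.card (Fin n → Bool) : ℝ) := by
      exact_mod_cast Fintype.card_pos
    have hsum1 : (Fintype.card (Fin n → Bool) : ℝ) * (A * (n:ℝ) ^ (1/p)) ^ 2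
        ≤ ∑ x : Fin n → Bool, ‖f x - f (fun i => ! x i)‖ ^ 2 := by
      have hc : ∑ x : Fin n → Bool, (A * (n:ℝ) ^ (1/p)) ^ 2
          = (Fintype.card (Fin n → Bool) : ℝ) * (A * (n:ℝ) ^ (1/p)) ^ 2 := by
        rw [Finset.sum_const, Finset.card_univ, nsmul_eq_mul]
      rw [← hc]
      exact Finset.sum_le_sum fun x _ => hdiag x
    have hsum2 : ∑ x : Fin n → Bool, ∑ i : Fin n, ‖f x - f (Function.update x i (! x i))‖ ^ 2
        ≤ (Fintype.card (Fin n → Bool) : ℝ) * ((n:ℝ) * B ^ 2) := by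
      have hc : ∑ x : Fin n → Bool, ((n:ℝ) * B ^ 2)
          = (Fintype.card (Fin n → Bool) : ℝ) * ((n:ℝ) * B ^ 2) := by
        rw [Finset.sum_const, Finset.card_univ, nsmul_eq_mul]
      rw [← hc]
      refine Finset.sum_le_sum fun x _ => ?_
      have hinner : ∑ i : Fin n, ‖f x - f (Function.update x i (! x i))‖ ^ 2
          ≤ ∑ _i : Fin n, B ^ 2 := Finset.sum_le_sum fun i _ => hedge x i
      calc ∑ i : Fin n, ‖f x - f (Function.update x i (! x i))‖ ^ 2
          ≤ ∑ _i : Fin n, B ^ 2 := hinner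
        _ = (n:ℝ) * B ^ 2 := by
            rw [Finset.sum_const, Finset.card_univ, Fintype.card_fin, nsmul_eq_mul]
    have hkey : (A * (n:ℝ) ^ (1/p)) ^ 2 ≤ (n:ℝ) * B ^ 2 :=
      le_of_mul_le_mul_left (le_trans hsum1 (le_trans hE hsum2)) hcard
    rw [mul_pow, hpow] at hkey
    have hs : (A * (n:ℝ) ^ (1/p - 1/2)) ^ 2 ≤ B ^ 2 := by
      rw [mul_pow, hpow]
      have he : (1/p - 1/2) * 2 = (1/p) * 2 - 1 := by ring
      rw [he, Real.rpow_sub hnR, Real.rpow_one, ← mul_div_assoc, div_le_iff₀ hnR]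
      linarith [hkey, mul_comm (n:ℝ) (B ^ 2)]
    have hApos : 0 < A * (n:ℝ) ^ (1/p - 1/2) := by
      have := Real.rpow_pos_of_pos hnR (1/p - 1/2)
      positivity
    have hfin : A * (n:ℝ) ^ (1/p - 1/2) ≤ B := by nlinarith [hs, hApos, hB]
    rw [le_div_iff₀ hA]
    linarith [hfin, mul_comm A ((n:ℝ) ^ (1/p - 1/2))]
  · -- part (ii): the optimal embedding
    refine ⟨fun x => WithLp.toLp 2 (fun i => if x i then (1:ℝ) else 0),
      (n:ℝ) ^ ((1:ℝ)/2 - 1/p), 1, Real.rpow_pos_of_pos hnR _, one_pos, ?_, ?_⟩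
    · rw [one_div ((n:ℝ) ^ ((1:ℝ)/2 - 1/p)), ← Real.rpow_neg hnR.le]
      congr 1; ring
    · intro x y
      set f : (Fin n → Bool) → EuclideanSpace ℝ (Fin n) :=
        fun x => WithLp.toLp 2 (fun i => if x i then (1:ℝ) else 0) with hf
      set k := (univ.filter fun i => x i ≠ y i).card with hk
      have hnorm : ‖f x - f y‖ = (k:ℝ) ^ ((1:ℝ)/2) := by
        rw [EuclideanSpace.norm_eq]
        have hpt : ∀ i, ‖(f x - f y) i‖ ^ 2 = if x i ≠ y i then (1:ℝ) else 0 := by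
          intro i
          have hi : (f x - f y) i = f x i - f y i := rfl
          rw [hi, hf]
          cases hx : x i <;> cases hy : y i <;> simp [hx, hy]
        calc Real.sqrt (∑ i, ‖(f x - f y) i‖ ^ 2)
            = Real.sqrt ((univ.filter fun i => x i ≠ y i).card : ℝ) := by
              rw [Finset.sum_congr rfl fun i _ => hpt i, Finset.sum_boole]
          _ = (k:ℝ) ^ ((1:ℝ)/2) := Real.sqrt_eq_rpow _
      rcases Nat.eq_zero_or_pos k with hk0 | hkpos
      · rw [hnorm, hk0]
        have h2 : ((0:ℕ):ℝ) ^ ((1:ℝ)/2) = 0 := by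
          rw [Nat.cast_zero, Real.zero_rpow (by norm_num)]
        have hp' : ((0:ℕ):ℝ) ^ ((1:ℝ)/p) = 0 := by
          rw [Nat.cast_zero, Real.zero_rpow (by positivity)]
        constructor
        · rw [h2, hp', mul_zero]
        · rw [h2, hp', mul_zero]
      · have hk1 : (1:ℝ) ≤ (k:ℝ) := by exact_mod_cast hkpos
        have hkR : (0:ℝ) < (k:ℝ) := by positivity
        have hkn : (k:ℝ) ≤ (n:ℝ) := by
          have : k ≤ n := by
            calc k ≤ univ.card := Finset.card_filter_le _ _
              _ = n := by rw [Finset.card_univ, Fintype.card_fin]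
          exact_mod_cast this
        constructor
        · rw [hnorm]
          have h1 : (n:ℝ) ^ ((1:ℝ)/2 - 1/p) ≤ (k:ℝ) ^ ((1:ℝ)/2 - 1/p) :=
            Real.rpow_le_rpow_of_nonpos hkR hkn (by linarith)
          calc (n:ℝ) ^ ((1:ℝ)/2 - 1/p) * (k:ℝ) ^ ((1:ℝ)/p)
              ≤ (k:ℝ) ^ ((1:ℝ)/2 - 1/p) * (k:ℝ) ^ ((1:ℝ)/p) :=
                mul_le_mul_of_nonneg_right h1 (Real.rpow_nonneg hkR.le _)
            _ = (k:ℝ) ^ ((1:ℝ)/2) := by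
                rw [← Real.rpow_add hkR]; congr 1; ring
        · rw [hnorm, one_mul]
          exact Real.rpow_le_rpow_of_exponent_le hk1 h12
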